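/- arXiv:1607.05780 — 5 statements merged into one kernel-verified Lean document; each statement's English description precedes it below -/
import Mathlib

section
/- Suppose U, V, Λ ∈ K^{n×n} satisfy the block equation H[U;V] − [δ_f(U); δ_f(V)] = [U;V]Λ where H = [[A, −R],[−Q, −Aᵀ]], and U is invertible. Then X := V U^{−1} solves the differential Riccati equation δ_f(X) + XA + AᵀX − XRX = −Q. -/
open Matrix

/-- if `[U; V]` spans an `H`-invariant subspace (block equation
with matrix `Λ`) and `U` is invertible, then `X := V U⁻¹` solves the
differential Riccati equation `δ_f(X) + XA + AᵀX − XRX = −Q`. -/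
theorem stmt_8 {K : Type*} [Field K] {n : ℕ} (δ : K → K)
    (hLeib : ∀ A B : Matrix (Fin n) (Fin n) K,
      (A * B).map δ = A.map δ * B + A * B.map δ)
    (hone : (1 : Matrix (Fin n) (Fin n) K).map δ = 0)
    (A R Q : Matrix (Fin n) (Fin n) K) (hR : R.IsSymm) (hQ : Q.IsSymm)
    (U V Λ : Matrix (Fin n) (Fin n) K) (hU : IsUnit U.det)
    (hblk1 : A * U - R * V - U.map δ = U * Λ)
    (hblk2 : -(Q * U) - Aᵀ * V - V.map δ = V * Λ) :
    (V * U⁻¹).map δ + (V * U⁻¹) * A + Aᵀ * (V * U⁻¹)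
      - (V * U⁻¹) * R * (V * U⁻¹) = -Q := by
  have hUinv : U * U⁻¹ = 1 := mul_nonsing_inv U hU
  have hUinv' : U⁻¹ * U = 1 := nonsing_inv_mul U hU
  have hcanc1 : ∀ x : Matrix (Fin n) (Fin n) K, U * (U⁻¹ * x) = x := by
    intro x; rw [← mul_assoc, hUinv, one_mul]
  have hcanc2 : ∀ x : Matrix (Fin n) (Fin n) K, U⁻¹ * (U * x) = x := by
    intro x; rw [← mul_assoc, hUinv', one_mul]
  have hdU : U.map δ = A * U - R * V - U * Λ := by rw [← hblk1]; abel
  have hdV : V.map δ = -(Q * U) - Aᵀ * V - V * Λ := by rw [← hblk2]; abel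
  have hdinv : (U⁻¹).map δ = -(U⁻¹ * U.map δ * U⁻¹) := by
    have h0 : U.map δ * U⁻¹ + U * (U⁻¹).map δ = 0 := by
      rw [← hLeib, hUinv, hone]
    have h1 : U * (U⁻¹).map δ = -(U.map δ * U⁻¹) := by
      rw [eq_neg_iff_add_eq_zero, add_comm]; exact h0
    calc (U⁻¹).map δ = U⁻¹ * (U * (U⁻¹).map δ) := (hcanc2 _).symm
      _ = -(U⁻¹ * U.map δ * U⁻¹) := by rw [h1]; noncomm_ring
  have hX : (V * U⁻¹).map δ
      = -Q - Aᵀ * (V * U⁻¹) - (V * U⁻¹) * A + (V * U⁻¹) * R * (V * U⁻¹) := by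
    rw [hLeib V U⁻¹, hdV, hdinv, hdU]
    simp only [sub_mul, add_mul, neg_mul, mul_neg, mul_sub, mul_add, mul_assoc,
      hcanc1, hcanc2, hUinv, hUinv', mul_one]
    abel
  rw [hX]; abel
end

section
/- A matrix M ∈ K^{n×n} is right simple (possesses n right eigenvectors spanning K^n) if and only if M is δ_f-conjugate to a diagonal matrix; similarly M is left simple if and only if M is δ_f-conjugate to a diagonal matrix. Consequently, M is right simple if and only if it is left simple. -/
open Matrix

/-- `M` is right simple: `n` right eigenvectors spanning `K^n`. -/
def RightSimple {K : Type*} [Field K] {n : ℕ} (δ : K → K)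
    (M : Matrix (Fin n) (Fin n) K) : Prop :=
  ∃ (w : Fin n → (Fin n → K)) (β : Fin n → K),
    (∀ k, w k ≠ 0 ∧ M.mulVec (w k) - (fun i => δ (w k i)) = β k • w k) ∧
    Submodule.span K (Set.range w) = ⊤

/-- `M` is left simple: `n` left eigenvectors spanning `K^n`. -/
def LeftSimple {K : Type*} [Field K] {n : ℕ} (δ : K → K)
    (M : Matrix (Fin n) (Fin n) K) : Prop :=
  ∃ (v : Fin n → (Fin n → K)) (α : Fin n → K),
    (∀ k, v k ≠ 0 ∧ Matrix.vecMul (v k) M + (fun i => δ (v k i)) = α k • v k) ∧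
    Submodule.span K (Set.range v) = ⊤

/-- `M` is `δ_f`-conjugate to a diagonal matrix. -/
def ConjToDiagonal {K : Type*} [Field K] {n : ℕ} (δ : K → K)
    (M : Matrix (Fin n) (Fin n) K) : Prop :=
  ∃ (T : Matrix (Fin n) (Fin n) K) (d : Fin n → K),
    IsUnit T.det ∧ M = (T * Matrix.diagonal d + T.map δ) * T⁻¹



section Aux

variable {K : Type*} [Field K] {n : ℕ} (δ : K → K)
    (hadd : ∀ a b : K, δ (a + b) = δ a + δ b)
    (hmul : ∀ a b : K, δ (a * b) = δ a * b + a * δ b)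

include hadd hmul in
lemma aux_d0 : δ 0 = 0 := by
  have := hadd 0 0
  simp only [add_zero] at this
  exact left_eq_add.mp this

include hadd hmul in
lemma aux_d1 : δ 1 = 0 := by
  have := hmul 1 1
  simp only [mul_one, one_mul] at this
  exact left_eq_add.mp this

include hadd hmul in
lemma aux_dsum {s : Finset (Fin n)} {f : Fin n → K} :
    δ (∑ i ∈ s, f i) = ∑ i ∈ s, δ (f i) :=
  map_sum (AddMonoidHom.mk' δ hadd) f s

include hadd hmul in
lemma aux_map_mul (A B : Matrix (Fin n) (Fin n) K) :
    (A * B).map δ = A.map δ * B + A * B.map δ := by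
  ext i j
  simp only [Matrix.map_apply, Matrix.mul_apply, Matrix.add_apply,
    aux_dsum δ hadd hmul, ← Finset.sum_add_distrib]
  exact Finset.sum_congr rfl fun k _ => hmul _ _

include hadd hmul in
lemma aux_map_one : (1 : Matrix (Fin n) (Fin n) K).map δ = 0 := by
  ext i j
  by_cases h : i = j <;>
    simp [Matrix.map_apply, Matrix.one_apply, h, aux_d0 δ hadd hmul, aux_d1 δ hadd hmul]

include hadd hmul in
lemma aux_map_inv {T : Matrix (Fin n) (Fin n) K} (hT : IsUnit T.det) :
    T⁻¹.map δ = -(T⁻¹ * T.map δ * T⁻¹) := by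
  have h0 : (T * T⁻¹).map δ = 0 := by
    rw [Matrix.mul_nonsing_inv _ hT, aux_map_one δ hadd hmul]
  rw [aux_map_mul δ hadd hmul] at h0
  have h1 : T⁻¹ * (T.map δ * T⁻¹ + T * T⁻¹.map δ) = 0 := by rw [h0, Matrix.mul_zero]
  rw [Matrix.mul_add, ← Matrix.mul_assoc, ← Matrix.mul_assoc,
    Matrix.nonsing_inv_mul _ hT, Matrix.one_mul] at h1
  have := eq_neg_of_add_eq_zero_right h1
  rw [this]

end Aux

section Main

variable {K : Type*} [Field K] {n : ℕ} (δ : K → K)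
    (hadd : ∀ a b : K, δ (a + b) = δ a + δ b)
    (hmul : ∀ a b : K, δ (a * b) = δ a * b + a * δ b)
    (M : Matrix (Fin n) (Fin n) K)

include hadd hmul in
lemma right_iff_conj : RightSimple δ M ↔ ConjToDiagonal δ M := by
  constructor
  · rintro ⟨w, β, h, hspan⟩
    set T : Matrix (Fin n) (Fin n) K := Matrix.of (fun i k => w k i) with hT
    have hcol : ∀ k, T.mulVec (Pi.single k 1) = w k := by
      intro k; funext i
      simp [Matrix.mulVec, dotProduct, Pi.single_apply, hT]
    have hsurj : Function.Surjective T.mulVec := by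
      have hle : Submodule.span K (Set.range w) ≤ LinearMap.range T.mulVecLin := by
        rw [Submodule.span_le]
        rintro _ ⟨k, rfl⟩
        exact ⟨Pi.single k 1, hcol k⟩
      have : Function.Surjective T.mulVecLin := by
        rw [← LinearMap.range_eq_top]
        exact top_le_iff.mp (hspan ▸ hle)
      exact this
    have hU : IsUnit T := Matrix.mulVec_surjective_iff_isUnit.mp hsurj
    have hdet : IsUnit T.det := (Matrix.isUnit_iff_isUnit_det T).mp hU
    refine ⟨T, β, hdet, ?_⟩
    have hMT : M * T = T * Matrix.diagonal β + T.map δ := by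
      ext i k
      rw [Matrix.add_apply, Matrix.mul_diagonal, Matrix.mul_apply, Matrix.map_apply]
      simp only [hT, Matrix.of_apply]
      have := congrFun (h k).2 i
      simp only [Pi.sub_apply, Pi.smul_apply, smul_eq_mul] at this
      rw [show (M.mulVec (w k)) i = ∑ j, M i j * w k j from rfl] at this
      linear_combination this
    rw [← hMT, Matrix.mul_assoc, Matrix.mul_nonsing_inv _ hdet, Matrix.mul_one]
  · rintro ⟨T, d, hdet, hM⟩
    have hU : IsUnit T := (Matrix.isUnit_iff_isUnit_det T).mpr hdet
    have hMT : M * T = T * Matrix.diagonal d + T.map δ := by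
      rw [hM, Matrix.mul_assoc, Matrix.nonsing_inv_mul _ hdet, Matrix.mul_one]
    set w : Fin n → (Fin n → K) := fun k i => T i k with hw
    have hcol : ∀ k, T.mulVec (Pi.single k 1) = w k := by
      intro k; funext i
      simp [Matrix.mulVec, dotProduct, Pi.single_apply, hw]
    refine ⟨w, d, fun k => ⟨?_, ?_⟩, ?_⟩
    · intro h0
      have hinj := Matrix.mulVec_injective_iff_isUnit.mpr hU
      have : (Pi.single k 1 : Fin n → K) = 0 := by
        apply hinj
        rw [hcol k, h0, Matrix.mulVec_zero]
      have := congrFun this k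
      simp at this
    · funext i
      have := congrFun (congrFun hMT i) k
      rw [Matrix.add_apply, Matrix.mul_diagonal, Matrix.mul_apply,
        Matrix.map_apply] at this
      simp only [Pi.sub_apply, Pi.smul_apply, smul_eq_mul]
      rw [show (M.mulVec (w k)) i = ∑ j, M i j * T j k from rfl]
      show _ - δ (T i k) = d k * T i k
      linear_combination this
    · rw [eq_top_iff]
      intro y _
      obtain ⟨c, rfl⟩ := Matrix.mulVec_surjective_iff_isUnit.mpr hU y
      have : T.mulVec c = ∑ k, c k • w k := by
        funext i
        simp only [Matrix.mulVec, dotProduct, Finset.sum_apply,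
          Pi.smul_apply, smul_eq_mul, hw]
        exact Finset.sum_congr rfl fun k _ => mul_comm _ _
      rw [this]
      exact Submodule.sum_mem _ fun k _ =>
        Submodule.smul_mem _ _ (Submodule.subset_span ⟨k, rfl⟩)

include hadd hmul in
lemma left_iff_conj : LeftSimple δ M ↔ ConjToDiagonal δ M := by
  constructor
  · rintro ⟨v, α, h, hspan⟩
    set S : Matrix (Fin n) (Fin n) K := Matrix.of v with hS
    have hrow : ∀ k, S.vecMul (Pi.single k 1) = v k := by
      intro k; funext j
      simp [Matrix.vecMul, dotProduct, Pi.single_apply, hS]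
    have hsurj : Function.Surjective S.vecMul := by
      have hle : Submodule.span K (Set.range v) ≤ LinearMap.range S.vecMulLinear := by
        rw [Submodule.span_le]
        rintro _ ⟨k, rfl⟩
        exact ⟨Pi.single k 1, hrow k⟩
      have : Function.Surjective S.vecMulLinear := by
        rw [← LinearMap.range_eq_top]
        exact top_le_iff.mp (hspan ▸ hle)
      exact this
    have hU : IsUnit S := Matrix.vecMul_surjective_iff_isUnit.mp hsurj
    have hdet : IsUnit S.det := (Matrix.isUnit_iff_isUnit_det S).mp hU
    have hSM : S * M + S.map δ = Matrix.diagonal α * S := by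
      ext k j
      rw [Matrix.add_apply, Matrix.diagonal_mul, Matrix.mul_apply, Matrix.map_apply]
      simp only [hS, Matrix.of_apply]
      have := congrFun (h k).2 j
      simp only [Pi.add_apply, Pi.smul_apply, smul_eq_mul] at this
      rw [show (Matrix.vecMul (v k) M) j = ∑ i, v k i * M i j from rfl] at this
      linear_combination this
    refine ⟨S⁻¹, α, Matrix.isUnit_nonsing_inv_det _ hdet, ?_⟩
    rw [Matrix.nonsing_inv_nonsing_inv _ hdet, aux_map_inv δ hadd hmul hdet]
    have key : S⁻¹ * (Matrix.diagonal α * S) = M + S⁻¹ * S.map δ := by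
      rw [← hSM, Matrix.mul_add, ← Matrix.mul_assoc,
        Matrix.nonsing_inv_mul _ hdet, Matrix.one_mul]
    calc M = S⁻¹ * (Matrix.diagonal α * S) - S⁻¹ * S.map δ := by
            rw [key]; abel
      _ = (S⁻¹ * Matrix.diagonal α + -(S⁻¹ * S.map δ * S⁻¹)) * S := by
            rw [add_mul, neg_mul, Matrix.mul_assoc (S⁻¹ * S.map δ),
              Matrix.nonsing_inv_mul _ hdet, Matrix.mul_one, Matrix.mul_assoc,
              sub_eq_add_neg]
  · rintro ⟨T, d, hdet, hM⟩
    have hU : IsUnit T := (Matrix.isUnit_iff_isUnit_det T).mpr hdet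
    have hMT : M * T = T * Matrix.diagonal d + T.map δ := by
      rw [hM, Matrix.mul_assoc, Matrix.nonsing_inv_mul _ hdet, Matrix.mul_one]
    set S : Matrix (Fin n) (Fin n) K := T⁻¹ with hSdef
    have hUS : IsUnit S := (Matrix.isUnit_iff_isUnit_det S).mpr
      (Matrix.isUnit_nonsing_inv_det _ hdet)
    have hSM : S * M + S.map δ = Matrix.diagonal d * S := by
      have h1 : S * M = (Matrix.diagonal d + S * T.map δ) * S := by
        have h2 : S * M * T = Matrix.diagonal d + S * T.map δ := by
          rw [Matrix.mul_assoc, hMT, Matrix.mul_add, ← Matrix.mul_assoc,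
            Matrix.nonsing_inv_mul _ hdet, Matrix.one_mul]
        calc S * M = S * M * T * T⁻¹ := by
              rw [Matrix.mul_assoc (S * M), Matrix.mul_nonsing_inv _ hdet,
                Matrix.mul_one]
          _ = (Matrix.diagonal d + S * T.map δ) * S := by rw [h2]
      rw [h1, hSdef, aux_map_inv δ hadd hmul hdet, add_mul]
      abel
    set v : Fin n → (Fin n → K) := fun k j => S k j with hv
    have hrow : ∀ k, S.vecMul (Pi.single k 1) = v k := by
      intro k; funext j
      simp [Matrix.vecMul, dotProduct, Pi.single_apply, hv]
    refine ⟨v, d, fun k => ⟨?_, ?_⟩, ?_⟩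
    · intro h0
      have hinj := Matrix.vecMul_injective_iff_isUnit.mpr hUS
      have : (Pi.single k 1 : Fin n → K) = 0 := by
        apply hinj
        show Matrix.vecMul (Pi.single k 1) S = Matrix.vecMul 0 S
        rw [hrow k, h0, Matrix.zero_vecMul]
      have := congrFun this k
      simp at this
    · funext j
      have := congrFun (congrFun hSM k) j
      rw [Matrix.add_apply, Matrix.diagonal_mul, Matrix.mul_apply,
        Matrix.map_apply] at this
      simp only [Pi.add_apply, Pi.smul_apply, smul_eq_mul]
      rw [show (Matrix.vecMul (v k) M) j = ∑ i, v k i * M i j from rfl]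
      show _ + δ (S k j) = d k * S k j
      linear_combination this
    · rw [eq_top_iff]
      intro y _
      obtain ⟨c, hc⟩ := Matrix.vecMul_surjective_iff_isUnit.mpr hUS y
      have hcomb : Matrix.vecMul c S = ∑ k, c k • v k := by
        funext j
        simp [Matrix.vecMul, dotProduct, Finset.sum_apply, hv]
      rw [← hc]
      show Matrix.vecMul c S ∈ _
      rw [hcomb]
      exact Submodule.sum_mem _ fun k _ =>
        Submodule.smul_mem _ _ (Submodule.subset_span ⟨k, rfl⟩)

end Main

/-- right simple ↔ conjugate to diagonal ↔ left simple. -/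
theorem stmt_12 {K : Type*} [Field K] {n : ℕ} (δ : K → K)
    (hadd : ∀ a b : K, δ (a + b) = δ a + δ b)
    (hmul : ∀ a b : K, δ (a * b) = δ a * b + a * δ b)
    (M : Matrix (Fin n) (Fin n) K) :
    (RightSimple δ M ↔ ConjToDiagonal δ M) ∧
      (LeftSimple δ M ↔ ConjToDiagonal δ M) ∧
      (RightSimple δ M ↔ LeftSimple δ M) := by
  refine ⟨right_iff_conj δ hadd hmul M, left_iff_conj δ hadd hmul M, ?_⟩
  rw [right_iff_conj δ hadd hmul M, left_iff_conj δ hadd hmul M]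
end

section
/- Let w_i = [u_i; v_i] and w_j = [u_j; v_j] be right eigenvectors of the differential Hamiltonian matrix H = [[A,−R],[−Q,−Aᵀ]] with right eigenvalues λ_i, λ_j respectively. Then the scalar ω := u_i* v_j − v_i* u_j satisfies the differential equation δ_f(ω) + (λ_i* + λ_j)·ω = 0. In particular, if λ_i* and −λ_j are not δ_f-conjugate, then ω = 0, i.e., u_i* v_j = v_i* u_j. -/
open Matrix

/-- for right eigenvectors `wᵢ = [uᵢ; vᵢ]`, `w_j = [u_j; v_j]` of
the Hamiltonian matrix `H` with eigenvalues `λᵢ, λ_j`, the scalar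
`ω = uᵢ* v_j − vᵢ* u_j` satisfies `δ_f(ω) + (λᵢ* + λ_j) ω = 0`; hence if `λᵢ*`
and `−λ_j` are not `δ_f`-conjugate, `ω = 0`. -/
theorem stmt_15 {K : Type*} [Field K] [StarRing K] {n : ℕ} (δ : K → K)
    (hadd : ∀ a b : K, δ (a + b) = δ a + δ b)
    (hmul : ∀ a b : K, δ (a * b) = δ a * b + a * δ b)
    (hstar : ∀ a : K, δ (star a) = star (δ a))
    (A R Q : Matrix (Fin n) (Fin n) K) (hR : R.IsSymm) (hQ : Q.IsSymm)
    (hAreal : ∀ i j, star (A i j) = A i j)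
    (hRreal : ∀ i j, star (R i j) = R i j)
    (hQreal : ∀ i j, star (Q i j) = Q i j)
    (H : Matrix (Fin n ⊕ Fin n) (Fin n ⊕ Fin n) K)
    (hH : H = Matrix.fromBlocks A (-R) (-Q) (-Aᵀ))
    (ui vi uj vj : Fin n → K) (lami lamj : K)
    (hwi : Sum.elim ui vi ≠ 0) (hwj : Sum.elim uj vj ≠ 0)
    (heigi : H.mulVec (Sum.elim ui vi) - (fun k => δ (Sum.elim ui vi k))
      = lami • Sum.elim ui vi)
    (heigj : H.mulVec (Sum.elim uj vj) - (fun k => δ (Sum.elim uj vj k))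
      = lamj • Sum.elim uj vj) :
    δ ((fun k => star (ui k)) ⬝ᵥ vj - (fun k => star (vi k)) ⬝ᵥ uj)
        + (star lami + lamj)
          * ((fun k => star (ui k)) ⬝ᵥ vj - (fun k => star (vi k)) ⬝ᵥ uj) = 0 ∧
      ((¬ ∃ c : K, c ≠ 0 ∧ -lamj = star lami + δ c / c) →
        (fun k => star (ui k)) ⬝ᵥ vj = (fun k => star (vi k)) ⬝ᵥ uj) := by
  classical
  -- δ as an additive hom
  let D : K →+ K := AddMonoidHom.mk' δ hadd
  have hDsum : ∀ (f : Fin n → K), δ (∑ k, f k) = ∑ k, δ (f k) :=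
    fun f => map_sum D f Finset.univ
  have hδsub : ∀ a b : K, δ (a - b) = δ a - δ b := fun a b => map_sub D a b
  -- componentwise eigen-equations
  have hδui : ∀ p, δ (ui p) = (A *ᵥ ui) p - (R *ᵥ vi) p - lami * ui p := by
    intro p
    have h := congrFun heigi (Sum.inl p)
    rw [hH] at h
    simp only [Matrix.fromBlocks_mulVec, Pi.sub_apply, Sum.elim_inl, Pi.smul_apply,
      smul_eq_mul, Pi.add_apply, Matrix.neg_mulVec, Pi.neg_apply,
      Sum.elim_comp_inl, Sum.elim_comp_inr] at h
    linear_combination -h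
  have hδvi : ∀ p, δ (vi p) = -(Q *ᵥ ui) p - (Aᵀ *ᵥ vi) p - lami * vi p := by
    intro p
    have h := congrFun heigi (Sum.inr p)
    rw [hH] at h
    simp only [Matrix.fromBlocks_mulVec, Pi.sub_apply, Sum.elim_inr, Pi.smul_apply,
      smul_eq_mul, Pi.add_apply, Matrix.neg_mulVec, Pi.neg_apply,
      Sum.elim_comp_inl, Sum.elim_comp_inr] at h
    linear_combination -h
  have hδuj : ∀ p, δ (uj p) = (A *ᵥ uj) p - (R *ᵥ vj) p - lamj * uj p := by
    intro p
    have h := congrFun heigj (Sum.inl p)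
    rw [hH] at h
    simp only [Matrix.fromBlocks_mulVec, Pi.sub_apply, Sum.elim_inl, Pi.smul_apply,
      smul_eq_mul, Pi.add_apply, Matrix.neg_mulVec, Pi.neg_apply,
      Sum.elim_comp_inl, Sum.elim_comp_inr] at h
    linear_combination -h
  have hδvj : ∀ p, δ (vj p) = -(Q *ᵥ uj) p - (Aᵀ *ᵥ vj) p - lamj * vj p := by
    intro p
    have h := congrFun heigj (Sum.inr p)
    rw [hH] at h
    simp only [Matrix.fromBlocks_mulVec, Pi.sub_apply, Sum.elim_inr, Pi.smul_apply,
      smul_eq_mul, Pi.add_apply, Matrix.neg_mulVec, Pi.neg_apply,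
      Sum.elim_comp_inl, Sum.elim_comp_inr] at h
    linear_combination -h
  -- star commutes with real-matrix mulVec
  have hMstar : ∀ (M : Matrix (Fin n) (Fin n) K), (∀ i j, star (M i j) = M i j) →
      ∀ (u : Fin n → K) (k : Fin n),
        star ((M *ᵥ u) k) = (M *ᵥ fun l => star (u l)) k := by
    intro M hM u k
    simp only [Matrix.mulVec, dotProduct, star_sum, star_mul', hM]
    try exact Finset.sum_congr rfl fun l _ => mul_comm _ _
  have hATreal : ∀ i j, star (Aᵀ i j) = Aᵀ i j := fun i j => hAreal j i
  -- transpose-dotProduct identity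
  have LT : ∀ (M : Matrix (Fin n) (Fin n) K) (x y : Fin n → K),
      (M *ᵥ x) ⬝ᵥ y = x ⬝ᵥ (Mᵀ *ᵥ y) := by
    intro M x y
    rw [Matrix.dotProduct_mulVec, Matrix.vecMul_transpose]
  -- expand δ of each dot product
  have S1 : δ ((fun k => star (ui k)) ⬝ᵥ vj)
      = (A *ᵥ fun k => star (ui k)) ⬝ᵥ vj - (R *ᵥ fun k => star (vi k)) ⬝ᵥ vj
        - star lami * ((fun k => star (ui k)) ⬝ᵥ vj)
        - (fun k => star (ui k)) ⬝ᵥ (Q *ᵥ uj)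
        - (fun k => star (ui k)) ⬝ᵥ (Aᵀ *ᵥ vj)
        - lamj * ((fun k => star (ui k)) ⬝ᵥ vj) := by
    simp only [dotProduct]
    rw [hDsum fun k => star (ui k) * vj k]
    have hpt : ∀ k ∈ Finset.univ, δ (star (ui k) * vj k)
        = (A *ᵥ fun l => star (ui l)) k * vj k - (R *ᵥ fun l => star (vi l)) k * vj k
          - star lami * (star (ui k) * vj k) - star (ui k) * (Q *ᵥ uj) k
          - star (ui k) * (Aᵀ *ᵥ vj) k - lamj * (star (ui k) * vj k) := by
      intro k _
      rw [hmul, hstar, hδui k, hδvj k, star_sub, star_sub, star_mul',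
        hMstar A hAreal ui k, hMstar R hRreal vi k]
      ring
    rw [Finset.sum_congr rfl hpt]
    simp only [Finset.sum_sub_distrib, ← Finset.mul_sum]
  have S2 : δ ((fun k => star (vi k)) ⬝ᵥ uj)
      = -((Q *ᵥ fun k => star (ui k)) ⬝ᵥ uj) - (Aᵀ *ᵥ fun k => star (vi k)) ⬝ᵥ uj
        - star lami * ((fun k => star (vi k)) ⬝ᵥ uj)
        + (fun k => star (vi k)) ⬝ᵥ (A *ᵥ uj)
        - (fun k => star (vi k)) ⬝ᵥ (R *ᵥ vj)
        - lamj * ((fun k => star (vi k)) ⬝ᵥ uj) := by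
    simp only [dotProduct]
    rw [hDsum fun k => star (vi k) * uj k]
    have hpt : ∀ k ∈ Finset.univ, δ (star (vi k) * uj k)
        = -((Q *ᵥ fun l => star (ui l)) k * uj k) - (Aᵀ *ᵥ fun l => star (vi l)) k * uj k
          - star lami * (star (vi k) * uj k) + star (vi k) * (A *ᵥ uj) k
          - star (vi k) * (R *ᵥ vj) k - lamj * (star (vi k) * uj k) := by
      intro k _
      rw [hmul, hstar, hδvi k, hδuj k, star_sub, star_sub, star_neg, star_mul',
        hMstar Q hQreal ui k, hMstar Aᵀ hATreal vi k]
      ring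
    rw [Finset.sum_congr rfl hpt]
    simp only [Finset.sum_sub_distrib, Finset.sum_add_distrib, Finset.sum_neg_distrib,
      ← Finset.mul_sum]
  -- cancellation identities
  have C1 := LT A (fun k => star (ui k)) vj
  have C2 : (R *ᵥ fun k => star (vi k)) ⬝ᵥ vj
      = (fun k => star (vi k)) ⬝ᵥ (R *ᵥ vj) := by rw [LT, hR.eq]
  have C3 : (Q *ᵥ fun k => star (ui k)) ⬝ᵥ uj
      = (fun k => star (ui k)) ⬝ᵥ (Q *ᵥ uj) := by rw [LT, hQ.eq]
  have C4 : (Aᵀ *ᵥ fun k => star (vi k)) ⬝ᵥ uj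
      = (fun k => star (vi k)) ⬝ᵥ (A *ᵥ uj) := by rw [LT, Matrix.transpose_transpose]
  have key : δ ((fun k => star (ui k)) ⬝ᵥ vj - (fun k => star (vi k)) ⬝ᵥ uj)
        + (star lami + lamj)
          * ((fun k => star (ui k)) ⬝ᵥ vj - (fun k => star (vi k)) ⬝ᵥ uj) = 0 := by
    rw [hδsub]
    linear_combination S1 - S2 + C1 - C2 + C3 + C4
  refine ⟨key, ?_⟩
  intro hnc
  by_contra hne
  apply hnc
  refine ⟨(fun k => star (ui k)) ⬝ᵥ vj - (fun k => star (vi k)) ⬝ᵥ uj,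
    sub_ne_zero.mpr hne, ?_⟩
  have hc := sub_ne_zero.mpr hne
  field_simp
  linear_combination -key
end

section
/- Let w_i = [u_i; v_i] and w_j = [u_j; v_j] be right eigenvectors of H = [[A,−R],[−Q,−Aᵀ]] with right eigenvalues λ_i, λ_j. Then ω̃ := u_iᵀ v_j − v_iᵀ u_j satisfies δ_f(ω̃) + (λ_i + λ_j)·ω̃ = 0; hence if λ_i and −λ_j are not δ_f-conjugate, then u_iᵀ v_j = v_iᵀ u_j. -/
open Matrix

/-- for right eigenvectors `wᵢ = [uᵢ; vᵢ]`, `w_j = [u_j; v_j]` of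
`H` with eigenvalues `λᵢ, λ_j`, the scalar `ω̃ = uᵢᵀ v_j − vᵢᵀ u_j` satisfies
`δ_f(ω̃) + (λᵢ + λ_j) ω̃ = 0`; hence if `λᵢ` and `−λ_j` are not
`δ_f`-conjugate, `uᵢᵀ v_j = vᵢᵀ u_j`. -/
theorem stmt_16 {K : Type*} [Field K] {n : ℕ} (δ : K → K)
    (hadd : ∀ a b : K, δ (a + b) = δ a + δ b)
    (hmul : ∀ a b : K, δ (a * b) = δ a * b + a * δ b)
    (A R Q : Matrix (Fin n) (Fin n) K) (hR : R.IsSymm) (hQ : Q.IsSymm)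
    (H : Matrix (Fin n ⊕ Fin n) (Fin n ⊕ Fin n) K)
    (hH : H = Matrix.fromBlocks A (-R) (-Q) (-Aᵀ))
    (ui vi uj vj : Fin n → K) (lami lamj : K)
    (hwi : Sum.elim ui vi ≠ 0) (hwj : Sum.elim uj vj ≠ 0)
    (heigi : H.mulVec (Sum.elim ui vi) - (fun k => δ (Sum.elim ui vi k))
      = lami • Sum.elim ui vi)
    (heigj : H.mulVec (Sum.elim uj vj) - (fun k => δ (Sum.elim uj vj k))
      = lamj • Sum.elim uj vj) :
    δ (ui ⬝ᵥ vj - vi ⬝ᵥ uj) + (lami + lamj) * (ui ⬝ᵥ vj - vi ⬝ᵥ uj) = 0 ∧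
      ((¬ ∃ c : K, c ≠ 0 ∧ -lamj = lami + δ c / c) → ui ⬝ᵥ vj = vi ⬝ᵥ uj) := by
  have h0 : δ 0 = 0 := by
    have h := hadd 0 0
    rw [add_zero] at h
    exact (left_eq_add.mp h)
  have hdot : ∀ a b : Fin n → K,
      δ (a ⬝ᵥ b) = (fun k => δ (a k)) ⬝ᵥ b + a ⬝ᵥ (fun k => δ (b k)) := by
    intro a b
    simp only [dotProduct]
    rw [show δ (∑ k, a k * b k) = ∑ k, δ (a k * b k) from
      map_sum (⟨⟨δ, h0⟩, hadd⟩ : K →+ K) _ _]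
    simp [hmul, Finset.sum_add_distrib]
  have hMdot : ∀ (M : Matrix (Fin n) (Fin n) K) (x y : Fin n → K),
      M.mulVec x ⬝ᵥ y = x ⬝ᵥ Mᵀ.mulVec y := by
    intro M x y
    simp only [dotProduct, mulVec, dotProduct, transpose_apply,
      Finset.sum_mul, Finset.mul_sum]
    rw [Finset.sum_comm]
    exact Finset.sum_congr rfl fun _ _ => Finset.sum_congr rfl fun _ _ => by ring
  simp only [hH, fromBlocks_mulVec, Sum.elim_comp_inl, Sum.elim_comp_inr]
    at heigi heigj
  have hδui : (fun k => δ (ui k)) = A.mulVec ui - R.mulVec vi - lami • ui := by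
    funext k
    have h := congrFun heigi (Sum.inl k)
    simp [neg_mulVec] at h
    simp [neg_mulVec, Pi.sub_apply, Pi.smul_apply, smul_eq_mul]
    linear_combination -h
  have hδvi : (fun k => δ (vi k)) = -(Q.mulVec ui) - Aᵀ.mulVec vi - lami • vi := by
    funext k
    have h := congrFun heigi (Sum.inr k)
    simp [neg_mulVec] at h
    simp [neg_mulVec, Pi.sub_apply, Pi.smul_apply, smul_eq_mul]
    linear_combination -h
  have hδuj : (fun k => δ (uj k)) = A.mulVec uj - R.mulVec vj - lamj • uj := by
    funext k
    have h := congrFun heigj (Sum.inl k)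
    simp [neg_mulVec] at h
    simp [neg_mulVec, Pi.sub_apply, Pi.smul_apply, smul_eq_mul]
    linear_combination -h
  have hδvj : (fun k => δ (vj k)) = -(Q.mulVec uj) - Aᵀ.mulVec vj - lamj • vj := by
    funext k
    have h := congrFun heigj (Sum.inr k)
    simp [neg_mulVec] at h
    simp [neg_mulVec, Pi.sub_apply, Pi.smul_apply, smul_eq_mul]
    linear_combination -h
  have hsub : ∀ a b : K, δ (a - b) = δ a - δ b := by
    intro a b
    have h := hadd (a - b) b
    rw [sub_add_cancel] at h
    linear_combination -h
  have key : δ (ui ⬝ᵥ vj - vi ⬝ᵥ uj)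
      = -(lami + lamj) * (ui ⬝ᵥ vj - vi ⬝ᵥ uj) := by
    rw [hsub, hdot, hdot, hδui, hδvj, hδvi, hδuj]
    simp only [sub_dotProduct, dotProduct_sub, neg_dotProduct, dotProduct_neg,
      smul_dotProduct, dotProduct_smul, smul_eq_mul]
    rw [hMdot A ui vj, hMdot R vi vj, hR.eq, hMdot Q ui uj, hQ.eq,
      hMdot Aᵀ vi uj, transpose_transpose]
    ring
  constructor
  · rw [key]; ring
  · intro hnc
    by_contra hne
    apply hnc
    refine ⟨ui ⬝ᵥ vj - vi ⬝ᵥ uj, sub_ne_zero.mpr hne, ?_⟩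
    rw [key]
    field_simp [sub_ne_zero.mpr hne]
    ring
end

section
/- Suppose U, V, Λ ∈ K^{n×n} satisfy H[U;V] − [δ_f(U);δ_f(V)] = [U;V]Λ with H = [[A,−R],[−Q,−Aᵀ]]. Then the matrix V*U satisfies the differential Lyapunov-type equation δ_f(V*U) + V*UΛ + Λ*V*U = −V*RV − U*QU. (Obtained by multiplying the upper block equation by V* and the conjugate of the lower block equation by U* and adding.) -/
open Matrix

/-- under the block equation, `V* U` satisfies the differential
Lyapunov-type equation
`δ_f(V*U) + V*U Λ + Λ* V*U = − V* R V − U* Q U`. -/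
theorem stmt_17 {K : Type*} [Field K] [StarRing K] {n : ℕ} (δ : K → K)
    (hLeib : ∀ A B : Matrix (Fin n) (Fin n) K,
      (A * B).map δ = A.map δ * B + A * B.map δ)
    (hstar : ∀ a : K, δ (star a) = star (δ a))
    (A R Q : Matrix (Fin n) (Fin n) K) (hR : R.IsSymm) (hQ : Q.IsSymm)
    (hAreal : ∀ i j, star (A i j) = A i j)
    (hRreal : ∀ i j, star (R i j) = R i j)
    (hQreal : ∀ i j, star (Q i j) = Q i j)
    (U V Λ : Matrix (Fin n) (Fin n) K)
    (hblk1 : A * U - R * V - U.map δ = U * Λ)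
    (hblk2 : -(Q * U) - Aᵀ * V - V.map δ = V * Λ) :
    (Vᴴ * U).map δ + Vᴴ * U * Λ + Λᴴ * (Vᴴ * U) = -(Vᴴ * R * V) - Uᴴ * Q * U := by
  have hU : U.map δ = A * U - R * V - U * Λ := by
    rw [sub_eq_iff_eq_add] at hblk1
    rw [hblk1]; abel
  have hV : V.map δ = -(Q * U) - Aᵀ * V - V * Λ := by
    rw [sub_eq_iff_eq_add] at hblk2
    rw [hblk2]; abel
  have hmapH : (Vᴴ).map δ = (V.map δ)ᴴ := by
    ext i j
    simp [conjTranspose_apply, Matrix.map_apply, hstar]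
  have hAH : (Aᵀ)ᴴ = A := by
    ext i j
    simp [conjTranspose_apply, transpose_apply, hAreal]
  have hQH : Qᴴ = Q := by
    ext i j
    rw [conjTranspose_apply, ← hQ.apply i j, hQreal]
  have key := hLeib Vᴴ U
  rw [hmapH, hU, hV] at key
  rw [key]
  simp only [conjTranspose_sub, conjTranspose_neg, conjTranspose_mul, hAH, hQH]
  noncomm_ring
end
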